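/- Let x : ℕ → ℝ → ℝ be a family of differentiable functions satisfying, for every t ∈ ℝ: x₁ has derivative −x₁(t) + 1 at t, and for every k ≥ 1, x_{k+1} has derivative −x_{k+1}(t) + 2·x_k(t) at t; and x_k(0) = 1 for every k ≥ 1. Then for every k ≥ 1, x_k(t) tends to 2^{k−1} as t → ∞. -/

import Mathlib

open Filter Polynomial

/-- Every real polynomial has a polynomial antiderivative. -/
lemma exists_antideriv (p : ℝ[X]) : ∃ q : ℝ[X], derivative q = p := by
  induction p using Polynomial.induction_on' with
  | add f g hf hg =>
    obtain ⟨qf, hqf⟩ := hf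
    obtain ⟨qg, hqg⟩ := hg
    exact ⟨qf + qg, by simp [hqf, hqg]⟩
  | monomial n a =>
    refine ⟨monomial (n + 1) (a / (n + 1)), ?_⟩
    rw [Polynomial.derivative_monomial]
    congr 1
    push_cast
    field_simp

/-- If a function has derivative zero everywhere, it is constant. -/
lemma const_of_hasDerivAt_zero {f : ℝ → ℝ} (h : ∀ t, HasDerivAt f 0 t) (t : ℝ) :
    f t = f 0 :=
  is_const_of_deriv_eq_zero (fun s => (h s).differentiableAt)
    (fun s => (h s).deriv) t 0

theorem cascade_tendsto_pow (x : ℕ → ℝ → ℝ)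
    (h1 : ∀ t : ℝ, HasDerivAt (x 1) (-(x 1 t) + 1) t)
    (hk : ∀ k : ℕ, 1 ≤ k → ∀ t : ℝ,
      HasDerivAt (x (k + 1)) (-(x (k + 1) t) + 2 * x k t) t)
    (h0 : ∀ k : ℕ, 1 ≤ k → x k 0 = 1) :
    ∀ k : ℕ, 1 ≤ k → Tendsto (x k) atTop (nhds ((2 : ℝ) ^ (k - 1))) := by
  -- main claim: exp t * (x k t - 2^(k-1)) is a polynomial in t
  have main : ∀ k : ℕ, 1 ≤ k → ∃ p : ℝ[X],
      ∀ t : ℝ, Real.exp t * (x k t - 2 ^ (k - 1)) = p.eval t := by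
    intro k hk1
    induction k, hk1 using Nat.le_induction with
    | base =>
      refine ⟨0, fun t => ?_⟩
      have hz : ∀ s : ℝ, HasDerivAt (fun t => Real.exp t * (x 1 t - 2 ^ (1 - 1))) 0 s := by
        intro s
        have := (Real.hasDerivAt_exp s).mul ((h1 s).sub_const (2 ^ (1 - 1)))
        refine this.congr_deriv ?_
        ring
      have hc := const_of_hasDerivAt_zero hz t
      simp only [h0 1 le_rfl] at hc
      simpa using hc
    | succ k hk1 ih =>
      obtain ⟨p, hp⟩ := ih
      obtain ⟨q, hq⟩ := exists_antideriv (2 * p)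
      -- v t := exp t * (x (k+1) t - 2^k) - q.eval t is constant
      have hz : ∀ s : ℝ, HasDerivAt
          (fun t => Real.exp t * (x (k + 1) t - 2 ^ k) - q.eval t) 0 s := by
        intro s
        have hd1 := (Real.hasDerivAt_exp s).mul (((hk k hk1 s)).sub_const ((2 : ℝ) ^ k))
        have hd2 : HasDerivAt (fun t : ℝ => q.eval t) ((2 * p).eval s) s := by
          have := q.hasDerivAt s
          rwa [hq] at this
        have := hd1.sub hd2
        refine this.congr_deriv ?_
        have hps := hp s
        have h2k : (2 : ℝ) ^ k = 2 * 2 ^ (k - 1) := by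
          rw [← pow_succ']
          congr 1
          omega
        rw [Polynomial.eval_mul, Polynomial.eval_ofNat, h2k, ← hps]
        ring
      have key : ∀ t : ℝ, Real.exp t * (x (k + 1) t - 2 ^ k) - q.eval t
          = Real.exp 0 * (x (k + 1) 0 - 2 ^ k) - q.eval 0 :=
        fun t => const_of_hasDerivAt_zero hz t
      refine ⟨q + Polynomial.C (Real.exp 0 * (x (k + 1) 0 - 2 ^ k) - q.eval 0), fun t => ?_⟩
      have := key t
      simp only [Nat.add_sub_cancel, Polynomial.eval_add, Polynomial.eval_C]
      linarith
  intro k hk1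
  obtain ⟨p, hp⟩ := main k hk1
  have hx : ∀ t : ℝ, x k t = 2 ^ (k - 1) + p.eval t / Real.exp t := by
    intro t
    have h := hp t
    have he : Real.exp t ≠ 0 := (Real.exp_pos t).ne'
    field_simp
    linarith [h]
  have : Tendsto (fun t => (2 : ℝ) ^ (k - 1) + p.eval t / Real.exp t) atTop
      (nhds ((2 : ℝ) ^ (k - 1) + 0)) :=
    tendsto_const_nhds.add (p.tendsto_div_exp_atTop)
  rw [add_zero] at this
  exact this.congr (fun t => (hx t).symm)
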